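/- Consider the input affine system ẋ = f(x) + g(x)u, y = h(x), let δ > 0 be a scalar, and let V : ℝⁿ → ℝ be differentiable with V(x) ≥ 0 for all x and V(0) = 0. Then the output strictly negative imaginary dissipation inequality ∇V(x)ᵀ (f(x) + g(x)u) ≤ uᵀẏ − δ ẏᵀẏ, with ẏ = ∇h(x)ᵀ (f(x) + g(x)u), holds for all x, u ∈ ℝⁿ if and only if for every x ∈ ℝⁿ, every scalar c ∈ ℝ, and every u ∈ ℝⁿ, the quadratic form of the (1+n)×(1+n) block matrix M(x) with (1,1) block ∇V(x)ᵀf(x) + δ f(x)ᵀ∇h(x)∇h(x)ᵀf(x), (1,2) block (1/2)∇V(x)ᵀg(x) − (1/2)f(x)ᵀ∇h(x) + δ f(x)ᵀ∇h(x)∇h(x)ᵀg(x), (2,1) block (1/2)g(x)ᵀ∇V(x) − (1/2)∇h(x)ᵀf(x) + δ g(x)ᵀ∇h(x)∇h(x)ᵀf(x), and (2,2) block δ g(x)ᵀ∇h(x)∇h(x)ᵀg(x) − g(x)ᵀ∇h(x) is nonpositive, i.e., (c, u)ᵀ M(x) (c, u) ≤ 0. -/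

import Mathlib

open Matrix


private lemma poly_coeff_nonpos (a b c : ℝ) (h : ∀ t : ℝ, a*t^2 + b*t + c ≤ 0) : a ≤ 0 := by
  by_contra hp
  push_neg at hp
  have hc : c ≤ 0 := by simpa using h 0
  have key : ∀ t : ℝ, a*t^2 + c ≤ 0 := by
    intro t
    have h1 := h t
    have h2 := h (-t)
    nlinarith
  have ht : (0:ℝ) ≤ (1 - c)/a := div_nonneg (by linarith) hp.le
  have h3 := key (Real.sqrt ((1 - c)/a))
  rw [Real.sq_sqrt ht] at h3
  have h4 : a * ((1 - c)/a) = 1 - c := by field_simp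
  linarith [h4 ▸ h3]

private lemma master (δ p q r s t1 t2 t3 c : ℝ)
    (H : ∀ k : ℝ, p + k*q ≤ k*r + (k*k)*s - δ*(t1 + 2*(k*t2) + (k*k)*t3)) :
    c*c*p + c*q - c*r - s + δ*(c*c*t1 + 2*(c*t2) + t3) ≤ 0 := by
  rcases eq_or_ne c 0 with rfl | hc
  · have hpoly : ∀ t : ℝ, (δ*t3 - s)*t^2 + (q - r + 2*(δ*t2))*t + (p + δ*t1) ≤ 0 := by
      intro t
      have := H t
      nlinarith
    have := poly_coeff_nonpos _ _ _ hpoly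
    nlinarith
  · have h := H c⁻¹
    have hle : c*c*(p + c⁻¹*q)
        ≤ c*c*(c⁻¹*r + (c⁻¹*c⁻¹)*s - δ*(t1 + 2*(c⁻¹*t2) + (c⁻¹*c⁻¹)*t3)) :=
      mul_le_mul_of_nonneg_left h (mul_self_nonneg c)
    have e1 : c*c*(p + c⁻¹*q) = c*c*p + c*q := by field_simp
    have e2 : c*c*(c⁻¹*r + (c⁻¹*c⁻¹)*s - δ*(t1 + 2*(c⁻¹*t2) + (c⁻¹*c⁻¹)*t3))
        = c*r + s - δ*(c*c*t1 + 2*(c*t2) + t3) := by field_simp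
    rw [e1, e2] at hle
    linarith


private lemma dot_fin1 (c : ℝ) (v : Fin 1 → ℝ) : (fun _ : Fin 1 => c) ⬝ᵥ v = c * v 0 := by
  simp [dotProduct]

private lemma swap {n : ℕ} (M : Matrix (Fin n) (Fin n) ℝ) (v w : Fin n → ℝ) :
    (Mᵀ *ᵥ v) ⬝ᵥ w = v ⬝ᵥ (M *ᵥ w) := by
  rw [mulVec_transpose, ← dotProduct_mulVec]

private lemma swap2 {n : ℕ} (M : Matrix (Fin n) (Fin n) ℝ) (v w : Fin n → ℝ) :
    (M *ᵥ v) ⬝ᵥ w = v ⬝ᵥ (Mᵀ *ᵥ w) := by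
  simpa using swap Mᵀ v w

private lemma blockA (a c : ℝ) :
    ((Matrix.of fun (_ : Fin 1) (_ : Fin 1) => a) *ᵥ fun _ => c) = fun _ => a * c := by
  funext i; simp [mulVec, dotProduct]

private lemma blockB {n : ℕ} (b : Fin n → ℝ) (u : Fin n → ℝ) :
    ((Matrix.of fun (_ : Fin 1) j => b j) *ᵥ u) = fun _ => b ⬝ᵥ u := by
  funext i; simp [mulVec, dotProduct]

private lemma blockC {n : ℕ} (b : Fin n → ℝ) (c : ℝ) :
    ((Matrix.of fun i (_ : Fin 1) => b i) *ᵥ fun _ => c) = c • b := by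
  funext i; simp [mulVec, dotProduct, mul_comm]

private lemma key {n : ℕ} (F vV u : Fin n → ℝ) (G H : Matrix (Fin n) (Fin n) ℝ) (δ c : ℝ) :
    Sum.elim (fun _ : Fin 1 => c) u ⬝ᵥ
      ((Matrix.fromBlocks
          (Matrix.of fun _ _ => vV ⬝ᵥ F + δ * (F ⬝ᵥ ((H * Hᵀ) *ᵥ F)))
          (Matrix.of fun (_ : Fin 1) j =>
            ((1/2 : ℝ) • (Gᵀ *ᵥ vV) - (1/2 : ℝ) • (Hᵀ *ᵥ F) + δ • ((Gᵀ * H * Hᵀ) *ᵥ F)) j)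
          (Matrix.of fun i (_ : Fin 1) =>
            ((1/2 : ℝ) • (Gᵀ *ᵥ vV) - (1/2 : ℝ) • (Hᵀ *ᵥ F) + δ • ((Gᵀ * H * Hᵀ) *ᵥ F)) i)
          (δ • (Gᵀ * H * Hᵀ * G) - Gᵀ * H)) *ᵥ
        Sum.elim (fun _ : Fin 1 => c) u)
    = c*c*(vV ⬝ᵥ F) + c*(vV ⬝ᵥ (G *ᵥ u)) - c*(u ⬝ᵥ (Hᵀ *ᵥ F)) - u ⬝ᵥ (Hᵀ *ᵥ (G *ᵥ u))
      + δ*(c*c*((Hᵀ *ᵥ F) ⬝ᵥ (Hᵀ *ᵥ F)) + 2*(c*((Hᵀ *ᵥ F) ⬝ᵥ (Hᵀ *ᵥ (G *ᵥ u))))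
          + (Hᵀ *ᵥ (G *ᵥ u)) ⬝ᵥ (Hᵀ *ᵥ (G *ᵥ u))) := by
  have hsplit : ((Gᵀ * H * Hᵀ) *ᵥ F) = Gᵀ *ᵥ (H *ᵥ (Hᵀ *ᵥ F)) := by
    rw [← mulVec_mulVec, ← mulVec_mulVec]
  have hb : ((1/2 : ℝ) • (Gᵀ *ᵥ vV) - (1/2 : ℝ) • (Hᵀ *ᵥ F) + δ • ((Gᵀ * H * Hᵀ) *ᵥ F)) ⬝ᵥ u
      = (1/2)*(vV ⬝ᵥ (G *ᵥ u)) - (1/2)*(u ⬝ᵥ (Hᵀ *ᵥ F))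
        + δ*((Hᵀ *ᵥ F) ⬝ᵥ (Hᵀ *ᵥ (G *ᵥ u))) := by
    rw [add_dotProduct, sub_dotProduct, smul_dotProduct, smul_dotProduct, smul_dotProduct,
      swap G vV u, dotProduct_comm (Hᵀ *ᵥ F) u, hsplit,
      swap G (H *ᵥ (Hᵀ *ᵥ F)) u, swap2 H (Hᵀ *ᵥ F) (G *ᵥ u)]
    simp [smul_eq_mul]
  have hub : u ⬝ᵥ ((1/2 : ℝ) • (Gᵀ *ᵥ vV) - (1/2 : ℝ) • (Hᵀ *ᵥ F) + δ • ((Gᵀ * H * Hᵀ) *ᵥ F))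
      = (1/2)*(vV ⬝ᵥ (G *ᵥ u)) - (1/2)*(u ⬝ᵥ (Hᵀ *ᵥ F))
        + δ*((Hᵀ *ᵥ F) ⬝ᵥ (Hᵀ *ᵥ (G *ᵥ u))) := by
    rw [dotProduct_comm, hb]
  have ha : F ⬝ᵥ ((H * Hᵀ) *ᵥ F) = (Hᵀ *ᵥ F) ⬝ᵥ (Hᵀ *ᵥ F) := by
    rw [← mulVec_mulVec, ← _root_.swap]
  have hD : u ⬝ᵥ ((δ • (Gᵀ * H * Hᵀ * G) - Gᵀ * H) *ᵥ u)
      = δ*((Hᵀ *ᵥ (G *ᵥ u)) ⬝ᵥ (Hᵀ *ᵥ (G *ᵥ u))) - u ⬝ᵥ (Hᵀ *ᵥ (G *ᵥ u)) := by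
    have e1 : u ⬝ᵥ ((Gᵀ * H * Hᵀ * G) *ᵥ u)
        = (Hᵀ *ᵥ (G *ᵥ u)) ⬝ᵥ (Hᵀ *ᵥ (G *ᵥ u)) := by
      rw [← mulVec_mulVec, ← mulVec_mulVec, ← mulVec_mulVec,
        ← swap2 G u (H *ᵥ (Hᵀ *ᵥ (G *ᵥ u))), ← swap H (G *ᵥ u) (Hᵀ *ᵥ (G *ᵥ u))]
    have e2 : u ⬝ᵥ ((Gᵀ * H) *ᵥ u) = u ⬝ᵥ (Hᵀ *ᵥ (G *ᵥ u)) := by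
      rw [← mulVec_mulVec, ← swap2 G u (H *ᵥ u), ← swap H (G *ᵥ u) u,
        dotProduct_comm (Hᵀ *ᵥ (G *ᵥ u)) u]
    rw [Matrix.sub_mulVec, dotProduct_sub, smul_mulVec, dotProduct_smul, smul_eq_mul,
      e1, e2]
  rw [fromBlocks_mulVec]
  rw [show (Sum.elim (fun _ : Fin 1 => c) u ∘ Sum.inl) = (fun _ : Fin 1 => c) from rfl,
      show (Sum.elim (fun _ : Fin 1 => c) u ∘ Sum.inr) = u from rfl]
  rw [sumElim_dotProduct_sumElim, blockA, blockB, blockC, dot_fin1]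
  simp only [Pi.add_apply]
  rw [dotProduct_add, dotProduct_smul, smul_eq_mul, hub, hD, ha, hb]
  ring

/-- For the input affine system ẋ = f(x) + g(x)u, y = h(x), with
`δ > 0` and a nonnegative differentiable storage function `V`, `V 0 = 0`, the
output strictly negative imaginary dissipation inequality
`∇V(x)ᵀ(f(x) + g(x)u) ≤ uᵀẏ − δẏᵀẏ` (with `ẏ = ∇h(x)ᵀ(f(x) + g(x)u)`) holds
for all `x`, `u` iff for every `x`, scalar `c`, and `u`, the quadratic form of
the (1+n)×(1+n) block matrix with blocks
(1,1): `∇V(x)ᵀf(x) + δ f(x)ᵀ∇h(x)∇h(x)ᵀf(x)`,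
(1,2): `(1/2)∇V(x)ᵀg(x) − (1/2)f(x)ᵀ∇h(x) + δ f(x)ᵀ∇h(x)∇h(x)ᵀg(x)`,
(2,1): `(1/2)g(x)ᵀ∇V(x) − (1/2)∇h(x)ᵀf(x) + δ g(x)ᵀ∇h(x)∇h(x)ᵀf(x)`,
(2,2): `δ g(x)ᵀ∇h(x)∇h(x)ᵀg(x) − g(x)ᵀ∇h(x)`
evaluated at `(c, u)` is nonpositive. -/
theorem outputStrictlyNegativeImaginary_iff_blockMatrix {n : ℕ}
    (f : (Fin n → ℝ) → (Fin n → ℝ))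
    (g : (Fin n → ℝ) → Matrix (Fin n) (Fin n) ℝ)
    (h : (Fin n → ℝ) → (Fin n → ℝ))
    (hf0 : f 0 = 0) (hh0 : h 0 = 0)
    (δ : ℝ) (hδ : 0 < δ)
    (V : (Fin n → ℝ) → ℝ)
    (gradV : (Fin n → ℝ) → (Fin n → ℝ))
    (gradh : (Fin n → ℝ) → Matrix (Fin n) (Fin n) ℝ)
    (hVdiff : Differentiable ℝ V)
    (hVgrad : ∀ x v, fderiv ℝ V x v = gradV x ⬝ᵥ v)
    (hhdiff : Differentiable ℝ h)
    (hhgrad : ∀ x v, fderiv ℝ h x v = (gradh x)ᵀ *ᵥ v)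
    (hVnonneg : ∀ x, 0 ≤ V x) (hV0 : V 0 = 0) :
    (∀ x u : Fin n → ℝ,
        gradV x ⬝ᵥ (f x + g x *ᵥ u)
          ≤ u ⬝ᵥ ((gradh x)ᵀ *ᵥ (f x + g x *ᵥ u))
            - δ * (((gradh x)ᵀ *ᵥ (f x + g x *ᵥ u)) ⬝ᵥ ((gradh x)ᵀ *ᵥ (f x + g x *ᵥ u))))
    ↔ (∀ (x : Fin n → ℝ) (c : ℝ) (u : Fin n → ℝ),
        Sum.elim (fun _ : Fin 1 => c) u ⬝ᵥ
          ((Matrix.fromBlocks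
              (Matrix.of fun _ _ =>
                gradV x ⬝ᵥ f x + δ * (f x ⬝ᵥ ((gradh x * (gradh x)ᵀ) *ᵥ f x)))
              (Matrix.of fun (_ : Fin 1) j =>
                ((1/2 : ℝ) • ((g x)ᵀ *ᵥ gradV x) - (1/2 : ℝ) • ((gradh x)ᵀ *ᵥ f x)
                  + δ • (((g x)ᵀ * gradh x * (gradh x)ᵀ) *ᵥ f x)) j)
              (Matrix.of fun i (_ : Fin 1) =>
                ((1/2 : ℝ) • ((g x)ᵀ *ᵥ gradV x) - (1/2 : ℝ) • ((gradh x)ᵀ *ᵥ f x)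
                  + δ • (((g x)ᵀ * gradh x * (gradh x)ᵀ) *ᵥ f x)) i)
              (δ • ((g x)ᵀ * gradh x * (gradh x)ᵀ * g x) - (g x)ᵀ * gradh x)) *ᵥ
            Sum.elim (fun _ : Fin 1 => c) u) ≤ 0) := by
  constructor
  · intro hyp x c u
    rw [key]
    apply master
    intro k
    have h := hyp x (k • u)
    simp only [mulVec_smul, mulVec_add, dotProduct_add, add_dotProduct, dotProduct_smul,
      smul_dotProduct, smul_eq_mul] at h
    rw [dotProduct_comm ((gradh x)ᵀ *ᵥ (g x *ᵥ u)) ((gradh x)ᵀ *ᵥ f x)] at h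
    ring_nf at h ⊢
    linarith
  · intro hyp2 x u
    have h := hyp2 x 1 u
    rw [key] at h
    simp only [one_mul, mul_one] at h
    simp only [mulVec_add, dotProduct_add, add_dotProduct, dotProduct_smul,
      smul_dotProduct, smul_eq_mul]
    rw [dotProduct_comm ((gradh x)ᵀ *ᵥ (g x *ᵥ u)) ((gradh x)ᵀ *ᵥ f x)]
    ring_nf at h ⊢
    linarith
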